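/- If b > 1 is an integer not a power of 10, then the sequence (b^n) satisfies Benford's Law: the natural density of n such that the first significant digit of b^n equals d is log₁₀(1 + 1/d), for each d ∈ {1,...,9}. -/

import Mathlib

open Real Filter MeasureTheory Finset Complex

local instance : Fact ((0:ℝ) < 1) := ⟨zero_lt_one⟩

open Real

lemma fact10 : ∀ p, (10:ℕ).factorization p = (Finsupp.single 2 1 + Finsupp.single 5 1 : ℕ →₀ ℕ) p := by
  intro p
  rw [show (10:ℕ) = 2*5 by norm_num, Nat.factorization_mul (by norm_num) (by norm_num)]
  simp [Nat.Prime.factorization (by norm_num : Nat.Prime 2),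
    Nat.Prime.factorization (by norm_num : Nat.Prime 5)]

lemma pow_eq_pow_ten (b m j : ℕ) (hb : 2 ≤ b) (hm : 1 ≤ m) (hj : 1 ≤ j)
    (heq : b ^ m = 10 ^ j) : ∃ k : ℕ, 1 ≤ k ∧ b = 10 ^ k := by
  have hb0 : b ≠ 0 := by omega
  have key : ∀ p, m * b.factorization p = j * (10:ℕ).factorization p := by
    intro p
    have h := congrArg (fun f => Nat.factorization f p) heq
    simpa [Nat.factorization_pow] using h
  have h2 : m * b.factorization 2 = j := by
    have := key 2; rw [fact10 2] at this; simpa using this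
  have h5 : m * b.factorization 5 = j := by
    have := key 5; rw [fact10 5] at this; simpa using this
  refine ⟨b.factorization 2, ?_, ?_⟩
  · rcases Nat.eq_zero_or_pos (b.factorization 2) with h | h
    · rw [h] at h2; omega
    · omega
  · apply Nat.eq_of_factorization_eq hb0 (by positivity)
    intro p
    rw [Nat.factorization_pow, Finsupp.smul_apply, smul_eq_mul]
    have hp := key p
    have : m * b.factorization p = m * (b.factorization 2 * (10:ℕ).factorization p) := by
      rw [hp, ← h2]; ring
    have := Nat.eq_of_mul_eq_mul_left (by omega : 0 < m) this
    omega

lemma logb_irrational (b : ℕ) (hb : 2 ≤ b) (h : ∀ k : ℕ, 1 ≤ k → b ≠ 10 ^ k) :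
    Irrational (Real.logb 10 b) := by
  set α := Real.logb 10 b with hα
  by_contra hir
  rw [Irrational] at hir
  push_neg at hir
  obtain ⟨q, hq⟩ := hir
  have hb1 : (1:ℝ) < b := by exact_mod_cast hb.trans_lt' one_lt_two
  have hαpos : 0 < α := Real.logb_pos (by norm_num) hb1
  have hqpos : 0 < q := by
    have : (0:ℝ) < q := hq ▸ hαpos
    exact_mod_cast this
  have hnum : 1 ≤ q.num := by exact_mod_cast (Rat.num_pos.mpr hqpos)
  -- (b:ℝ) ^ q.den = 10 ^ q.num.natAbs
  have hden : α * q.den = q.num := by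
    rw [← hq]
    rw [Rat.cast_def]
    field_simp
  have hlogeq : Real.logb 10 ((b:ℝ) ^ q.den) = Real.logb 10 ((10:ℝ) ^ q.num.natAbs) := by
    rw [Real.logb_pow, Real.logb_pow, Real.logb_self_eq_one (by norm_num), mul_one]
    rw [← hα] at *
    rw [mul_comm] at hden
    rw [hden]
    congr 1
    exact_mod_cast (Int.natAbs_of_nonneg (by omega)).symm
  have hpow : (b:ℝ) ^ q.den = (10:ℝ) ^ q.num.natAbs := by
    have h1 : (0:ℝ) < (b:ℝ) ^ q.den := by positivity
    have h2 : (0:ℝ) < (10:ℝ) ^ q.num.natAbs := by positivity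
    have := congrArg (fun x => (10:ℝ) ^ x) hlogeq
    simpa [Real.rpow_logb (by norm_num : (0:ℝ)<10) (by norm_num : (10:ℝ) ≠ 1) h1, Real.rpow_logb (by norm_num : (0:ℝ)<10) (by norm_num : (10:ℝ) ≠ 1) h2] using this
  have hnat : b ^ q.den = 10 ^ q.num.natAbs := by exact_mod_cast hpow
  obtain ⟨k, hk1, hk2⟩ := pow_eq_pow_ten b q.den q.num.natAbs hb q.pos (by omega) hnat
  exact h k hk1 hk2

noncomputable def bavg (α : ℝ) (g : C(UnitAddCircle, ℂ)) (N : ℕ) : ℂ :=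
  (N : ℂ)⁻¹ * ∑ n ∈ Finset.range N, g ((n * α : ℝ) : UnitAddCircle)

lemma weyl_char {α : ℝ} (hα : Irrational α) (k : ℤ) (hk : k ≠ 0) :
    Tendsto (bavg α (fourier k)) atTop (nhds 0) := by
  set z : ℂ := Complex.exp (2 * (π:ℂ) * Complex.I * (k:ℂ) * (α:ℂ)) with hz
  have hterm : ∀ n : ℕ, (fourier k ((n * α : ℝ) : UnitAddCircle) : ℂ) = z ^ n := by
    intro n
    rw [fourier_coe_apply, hz, ← Complex.exp_nat_mul]
    push_cast
    ring_nf
  have hz1 : z ≠ 1 := by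
    intro hzz
    rw [Complex.exp_eq_one_iff] at hzz
    obtain ⟨m, hm⟩ := hzz
    have h2 : (2 * (π:ℂ) * Complex.I) ≠ 0 := by
      simp [Real.pi_ne_zero, Complex.I_ne_zero]
    have hcm : (k:ℂ) * (α:ℂ) = (m:ℂ) := by
      apply mul_left_cancel₀ h2
      rw [show 2 * (π:ℂ) * Complex.I * ((k:ℂ) * (α:ℂ)) = 2 * (π:ℂ) * Complex.I * (k:ℂ) * (α:ℂ) by ring, hm]
      ring
    have hr : (k:ℝ) * α = (m:ℝ) := by exact_mod_cast hcm
    have : α = ((m / k : ℚ) : ℝ) := by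
      push_cast
      field_simp
      rw [mul_comm] at hr
      exact_mod_cast hr
    exact hα ⟨(m / k : ℚ), this.symm⟩
  have hnz : ‖z - 1‖ ≠ 0 := by
    simpa [sub_eq_zero] using hz1
  have habs : ∀ n : ℕ, ‖z ^ n‖ = 1 := by
    intro n
    have : z = Complex.exp ((2 * π * k * α : ℝ) * Complex.I) := by
      rw [hz]; push_cast; ring_nf
    rw [this, norm_pow, Complex.norm_exp_ofReal_mul_I, one_pow]
  have hbound : ∀ N : ℕ, ‖bavg α (fourier k) N‖ ≤ (N : ℝ)⁻¹ * (2 / ‖z - 1‖) := by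
    intro N
    unfold bavg
    simp_rw [hterm]
    rw [geom_sum_eq hz1, norm_mul]
    gcongr
    · simp
    rw [norm_div]
    gcongr
    calc ‖z ^ N - 1‖ ≤ ‖z ^ N‖ + ‖(1:ℂ)‖ := norm_sub_le _ _
    _ = 2 := by rw [habs N]; norm_num
  apply squeeze_zero_norm hbound
  have : Tendsto (fun N : ℕ => (N:ℝ)⁻¹) atTop (nhds 0) := tendsto_inv_atTop_nhds_zero_nat
  simpa using this.mul_const (2 / ‖z - 1‖)

lemma cm_integrable (g : C(UnitAddCircle, ℂ)) :
    Integrable g (AddCircle.haarAddCircle) :=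
  g.continuous.integrable_of_hasCompactSupport (HasCompactSupport.of_compactSpace g)

lemma weyl_continuous {α : ℝ} (hα : Irrational α) (g : C(UnitAddCircle, ℂ)) :
    Tendsto (bavg α g) atTop (nhds (∫ z, g z ∂AddCircle.haarAddCircle)) := by
  -- first for elements of the span of the fourier monomials
  have hspan : ∀ g ∈ Submodule.span ℂ (Set.range (@fourier 1)),
      Tendsto (bavg α g) atTop (nhds (∫ z, g z ∂AddCircle.haarAddCircle)) := by
    intro g hg
    induction hg using Submodule.span_induction with
    | mem f hf =>
      obtain ⟨k, rfl⟩ := hf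
      by_cases hk : k = 0
      · subst hk
        have hint : ∫ z, (fourier 0 : C(UnitAddCircle, ℂ)) z ∂AddCircle.haarAddCircle = 1 := by
          simp_rw [fourier_zero]
          simp
        rw [hint]
        apply Tendsto.congr' (f₁ := fun _ => (1:ℂ)) _ tendsto_const_nhds
        filter_upwards [eventually_ge_atTop 1] with N hN
        unfold bavg
        simp_rw [fourier_zero]
        rw [Finset.sum_const, Finset.card_range, nsmul_eq_mul, mul_one]
        have hNne : (N:ℂ) ≠ 0 := by
          exact_mod_cast Nat.one_le_iff_ne_zero.mp hN
        rw [inv_mul_cancel₀ hNne]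
      · have hint : ∫ z, (fourier k : C(UnitAddCircle, ℂ)) z ∂AddCircle.haarAddCircle = 0 :=
          integral_eq_zero_of_add_right_eq_neg (fourier_add_half_inv_index hk zero_lt_one)
        rw [hint]
        exact weyl_char hα k hk
    | zero =>
      have : bavg α 0 = fun _ => 0 := by
        funext N; unfold bavg; simp
      rw [this]
      simpa using tendsto_const_nhds
    | add f₁ f₂ h₁ h₂ ih₁ ih₂ =>
      have : bavg α (f₁ + f₂) = fun N => bavg α f₁ N + bavg α f₂ N := by
        funext N; unfold bavg
        simp [Finset.sum_add_distrib, mul_add]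
      rw [this]
      simp only [ContinuousMap.add_apply]
      rw [integral_add (cm_integrable f₁) (cm_integrable f₂)]
      exact ih₁.add ih₂
    | smul c f hf ih =>
      have : bavg α (c • f) = fun N => c * bavg α f N := by
        funext N; unfold bavg
        rw [Finset.mul_sum, Finset.mul_sum, Finset.mul_sum]
        apply Finset.sum_congr rfl
        intro n _
        simp only [ContinuousMap.smul_apply, smul_eq_mul]
        ring
      rw [this]
      have hint : ∫ z, (c • f : C(UnitAddCircle, ℂ)) z ∂AddCircle.haarAddCircle
          = c * ∫ z, f z ∂AddCircle.haarAddCircle := by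
        simp_rw [ContinuousMap.coe_smul, Pi.smul_apply, smul_eq_mul]
        rw [MeasureTheory.integral_const_mul]
      rw [hint]
      exact (ih.const_mul c)
  -- density argument
  rw [Metric.tendsto_atTop]
  intro ε hε
  have hgmem : g ∈ closure ((Submodule.span ℂ (Set.range (@fourier 1)) : Submodule ℂ C(UnitAddCircle, ℂ)) : Set C(UnitAddCircle, ℂ)) := by
    have := span_fourier_closure_eq_top (T := 1)
    rw [← Submodule.topologicalClosure_coe]
    rw [this]
    trivial
  rw [Metric.mem_closure_iff] at hgmem
  obtain ⟨P, hPmem, hPdist⟩ := hgmem (ε/4) (by linarith)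
  have hPtendsto := hspan P hPmem
  rw [Metric.tendsto_atTop] at hPtendsto
  obtain ⟨N₀, hN₀⟩ := hPtendsto (ε/4) (by linarith)
  refine ⟨max N₀ 1, fun N hN => ?_⟩
  have hN1 : 1 ≤ N := le_trans (le_max_right _ _) hN
  have hNN₀ : N₀ ≤ N := le_trans (le_max_left _ _) hN
  have hd : ‖g - P‖ < ε / 4 := by
    rwa [dist_eq_norm] at hPdist
  have h1 : dist (bavg α g N) (bavg α P N) ≤ ‖g - P‖ := by
    rw [dist_eq_norm]
    have heq : bavg α g N - bavg α P N
        = (N : ℂ)⁻¹ * ∑ n ∈ Finset.range N, ((g - P) ((n * α : ℝ) : UnitAddCircle)) := by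
      unfold bavg
      simp only [ContinuousMap.sub_apply]
      rw [Finset.sum_sub_distrib, mul_sub]
    rw [heq, norm_mul]
    calc ‖((N:ℂ))⁻¹‖ * ‖∑ n ∈ Finset.range N, ((g - P) ((n * α : ℝ) : UnitAddCircle))‖
        ≤ ‖((N:ℂ))⁻¹‖ * ∑ n ∈ Finset.range N, ‖(g - P) ((n * α : ℝ) : UnitAddCircle)‖ := by
          gcongr
          exact norm_sum_le _ _
      _ ≤ ‖((N:ℂ))⁻¹‖ * ∑ n ∈ Finset.range N, ‖g - P‖ := by
          gcongr with n hn
          exact ContinuousMap.norm_coe_le_norm (g - P) _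
      _ = ‖((N:ℂ))⁻¹‖ * (N * ‖g - P‖) := by
          rw [Finset.sum_const, Finset.card_range, nsmul_eq_mul]
      _ ≤ ‖g - P‖ := by
          have hNne : (0:ℝ) < (N:ℝ) := by exact_mod_cast hN1
          rw [show ‖((N:ℂ))⁻¹‖ = ((N:ℝ))⁻¹ by rw [norm_inv]; norm_num]
          rw [← mul_assoc, inv_mul_cancel₀ hNne.ne', one_mul]
  have h2 : dist (∫ z, P z ∂AddCircle.haarAddCircle) (∫ z, g z ∂AddCircle.haarAddCircle)
      ≤ ‖g - P‖ := by
    rw [dist_eq_norm, ← integral_sub (cm_integrable P) (cm_integrable g)]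
    have := norm_integral_le_of_norm_le_const (μ := (AddCircle.haarAddCircle : Measure UnitAddCircle))
      (f := fun z => P z - g z) (C := ‖g - P‖) ?_
    · simpa using this
    · filter_upwards with z
      have : P z - g z = (P - g) z := rfl
      rw [this]
      calc ‖(P - g) z‖ ≤ ‖P - g‖ := ContinuousMap.norm_coe_le_norm _ _
        _ = ‖g - P‖ := norm_sub_rev _ _
  calc dist (bavg α g N) (∫ z, g z ∂AddCircle.haarAddCircle)
      ≤ dist (bavg α g N) (bavg α P N)
        + dist (bavg α P N) (∫ z, P z ∂AddCircle.haarAddCircle)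
        + dist (∫ z, P z ∂AddCircle.haarAddCircle) (∫ z, g z ∂AddCircle.haarAddCircle) :=
        dist_triangle4 _ _ _ _
    _ < ε := by
        have a1 := h1.trans_lt hd
        have a2 := hN₀ N hNN₀
        have a3 := h2.trans_lt hd
        linarith

noncomputable def trap (a c δ : ℝ) : ℝ → ℝ :=
  fun x => max 0 (min 1 (min ((x - (a+δ))/δ) (((c-δ) - x)/δ)))

lemma trap_nonneg (a c δ x : ℝ) : 0 ≤ trap a c δ x := le_max_left _ _

lemma trap_le_one (a c δ x : ℝ) : trap a c δ x ≤ 1 :=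
  max_le zero_le_one (min_le_left _ _)

lemma trap_cont (a c δ : ℝ) : Continuous (trap a c δ) := by
  unfold trap; fun_prop

lemma trap_eq_zero_of_notmem {a c δ x : ℝ} (hδ : 0 < δ) (hx : x ∉ Set.Ico a c) :
    trap a c δ x = 0 := by
  rw [Set.mem_Ico, not_and_or, not_le, not_lt] at hx
  unfold trap
  rcases hx with h | h
  · have hA : (x - (a+δ))/δ < 0 := div_neg_of_neg_of_pos (by linarith) hδ
    have : min 1 (min ((x - (a+δ))/δ) (((c-δ) - x)/δ)) ≤ (x - (a+δ))/δ :=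
      (min_le_right _ _).trans (min_le_left _ _)
    exact max_eq_left (this.trans hA.le)
  · have hB : ((c-δ) - x)/δ < 0 := div_neg_of_neg_of_pos (by linarith) hδ
    have : min 1 (min ((x - (a+δ))/δ) (((c-δ) - x)/δ)) ≤ ((c-δ) - x)/δ :=
      (min_le_right _ _).trans (min_le_right _ _)
    exact max_eq_left (this.trans hB.le)

lemma trap_eq_one {a c δ x : ℝ} (hδ : 0 < δ) (h1 : a + 2*δ ≤ x) (h2 : x ≤ c - 2*δ) :
    trap a c δ x = 1 := by
  unfold trap
  have hA : (1:ℝ) ≤ (x - (a+δ))/δ := by rw [le_div_iff₀ hδ]; linarith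
  have hB : (1:ℝ) ≤ ((c-δ) - x)/δ := by rw [le_div_iff₀ hδ]; linarith
  rw [min_eq_left (le_min hA hB), max_eq_right zero_le_one]

lemma trap_zero {a c δ : ℝ} (hδ : 0 < δ) (ha : 0 ≤ a) : trap a c δ 0 = 0 := by
  unfold trap
  have hA : (0 - (a+δ))/δ < 0 := div_neg_of_neg_of_pos (by linarith) hδ
  have : min 1 (min ((0 - (a+δ))/δ) (((c-δ) - 0)/δ)) ≤ (0 - (a+δ))/δ :=
    (min_le_right _ _).trans (min_le_left _ _)
  exact max_eq_left (this.trans hA.le)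

lemma trap_one_eq {a c δ : ℝ} (hδ : 0 < δ) (hc : c ≤ 1) : trap a c δ 1 = 0 := by
  unfold trap
  have hB : ((c-δ) - 1)/δ < 0 := div_neg_of_neg_of_pos (by linarith) hδ
  have : min 1 (min ((1 - (a+δ))/δ) (((c-δ) - 1)/δ)) ≤ ((c-δ) - 1)/δ :=
    (min_le_right _ _).trans (min_le_right _ _)
  exact max_eq_left (this.trans hB.le)

lemma trap_integral_lower {a c δ : ℝ} (hδ : 0 < δ) (ha : 0 ≤ a) (hc : c ≤ 1)
    (hmid : a + 2*δ ≤ c - 2*δ) :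
    c - a - 4*δ ≤ ∫ x in (0:ℝ)..1, trap a c δ x := by
  have hint : ∀ p q : ℝ, IntervalIntegrable (trap a c δ) volume p q :=
    fun p q => (trap_cont a c δ).intervalIntegrable p q
  have h0p : (0:ℝ) ≤ a + 2*δ := by linarith
  have hq1 : c - 2*δ ≤ 1 := by linarith
  have hsplit : ∫ x in (0:ℝ)..1, trap a c δ x
      = (∫ x in (0:ℝ)..(a+2*δ), trap a c δ x)
        + ((∫ x in (a+2*δ)..(c-2*δ), trap a c δ x)
        + ∫ x in (c-2*δ)..1, trap a c δ x) := by
    rw [intervalIntegral.integral_add_adjacent_intervals (hint _ _) (hint _ _),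
      intervalIntegral.integral_add_adjacent_intervals (hint _ _) (hint _ _)]
  have hmid_eq : (∫ x in (a+2*δ)..(c-2*δ), trap a c δ x) = c - a - 4*δ := by
    rw [intervalIntegral.integral_congr (g := fun _ => (1:ℝ))]
    · rw [intervalIntegral.integral_const, smul_eq_mul, mul_one]; ring
    · intro x hx
      rw [Set.uIcc_of_le hmid] at hx
      exact trap_eq_one hδ hx.1 hx.2
  have h1 : 0 ≤ ∫ x in (0:ℝ)..(a+2*δ), trap a c δ x :=
    intervalIntegral.integral_nonneg h0p (fun x _ => trap_nonneg _ _ _ _)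
  have h2 : 0 ≤ ∫ x in (c-2*δ)..1, trap a c δ x :=
    intervalIntegral.integral_nonneg hq1 (fun x _ => trap_nonneg _ _ _ _)
  rw [hsplit, hmid_eq]
  linarith

lemma coe_fract_eq (x : ℝ) : ((Int.fract x : ℝ) : UnitAddCircle) = (x : UnitAddCircle) := by
  have h0 : ((x - Int.fract x : ℝ) : UnitAddCircle) = 0 := by
    rw [AddCircle.coe_eq_zero_iff]
    exact ⟨⌊x⌋, by rw [zsmul_eq_mul, mul_one, Int.self_sub_fract]⟩
  have h2 : ((Int.fract x : ℝ) : UnitAddCircle) = ↑x - ↑(x - Int.fract x) := by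
    rw [← AddCircle.coe_sub]
    norm_num
  rw [h2, h0, sub_zero]


lemma weyl_real {α : ℝ} (hα : Irrational α) (g : C(UnitAddCircle, ℝ)) :
    Tendsto (fun N : ℕ => (N:ℝ)⁻¹ * ∑ n ∈ Finset.range N, g ((n * α : ℝ) : UnitAddCircle))
      atTop (nhds (∫ z, g z ∂AddCircle.haarAddCircle)) := by
  set gC : C(UnitAddCircle, ℂ) :=
    ⟨fun z => ((g z : ℝ) : ℂ), Complex.continuous_ofReal.comp g.continuous⟩ with hgC
  have h1 : ∀ N : ℕ, bavg α gC N
      = (((N:ℝ)⁻¹ * ∑ n ∈ Finset.range N, g ((n * α : ℝ) : UnitAddCircle) : ℝ) : ℂ) := by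
    intro N
    unfold bavg
    push_cast
    rfl
  have h2 : ∫ z, gC z ∂AddCircle.haarAddCircle
      = ((∫ z, g z ∂AddCircle.haarAddCircle : ℝ) : ℂ) := by
    rw [hgC]
    exact integral_ofReal
  have h3 := weyl_continuous hα gC
  rw [h2] at h3
  have h4 := (Complex.continuous_re.tendsto _).comp h3
  simp only [Function.comp_def, h1, Complex.ofReal_re] at h4
  exact h4

lemma count_lower {α : ℝ} (hα : Irrational α) {a c : ℝ} (ha : 0 ≤ a) (hac : a ≤ c) (hc : c ≤ 1)
    {ε : ℝ} (hε : 0 < ε) :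
    ∀ᶠ N : ℕ in atTop, c - a - ε ≤
      ((((Finset.range N).filter fun n : ℕ => Int.fract (n * α) ∈ Set.Ico a c).card : ℝ) / N) := by
  by_cases htriv : c - a ≤ ε
  · filter_upwards [eventually_ge_atTop 1] with N hN
    have hpos : (0:ℝ) ≤ ((((Finset.range N).filter fun n : ℕ => Int.fract (n * α) ∈ Set.Ico a c).card : ℝ) / N) := by
      positivity
    linarith
  push_neg at htriv
  set δ := ε/5 with hδdef
  have hδ : 0 < δ := by positivity
  have hmid : a + 2*δ ≤ c - 2*δ := by
    rw [hδdef]; linarith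
  have hz1 : trap a c δ 0 = trap a c δ 1 := by
    rw [trap_zero hδ ha, trap_one_eq hδ hc]
  set F : C(UnitAddCircle, ℝ) :=
    ⟨AddCircle.liftIco 1 0 (trap a c δ),
     AddCircle.liftIco_zero_continuous (by rw [hz1]) (trap_cont a c δ).continuousOn⟩ with hF
  have hFcoe : ∀ x : ℝ, x ∈ Set.Ico (0:ℝ) 1 → F ((x : ℝ) : UnitAddCircle) = trap a c δ x := by
    intro x hx
    exact AddCircle.liftIco_zero_coe_apply (f := trap a c δ) hx
  -- integral of F
  have hFint : ∫ z, F z ∂AddCircle.haarAddCircle = ∫ x in (0:ℝ)..1, trap a c δ x := by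
    have hvol : (volume : Measure UnitAddCircle) = AddCircle.haarAddCircle := by
      rw [AddCircle.volume_eq_smul_haarAddCircle]
      simp
    rw [← hvol, ← AddCircle.intervalIntegral_preimage 1 0 (F : UnitAddCircle → ℝ), zero_add]
    apply intervalIntegral.integral_congr
    intro x hx
    rw [Set.uIcc_of_le zero_le_one] at hx
    rcases lt_or_eq_of_le hx.2 with h | h
    · exact hFcoe x ⟨hx.1, h⟩
    · subst h
      show F ((1:ℝ) : UnitAddCircle) = trap a c δ 1
      have : ((1:ℝ) : UnitAddCircle) = ((0:ℝ) : UnitAddCircle) := by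
        have := AddCircle.coe_add_period (1:ℝ) 0
        rw [zero_add] at this
        exact this
      rw [this, hFcoe 0 ⟨le_refl _, zero_lt_one⟩, trap_zero hδ ha, trap_one_eq hδ hc]
  have hIlow : c - a - 4*δ ≤ ∫ z, F z ∂AddCircle.haarAddCircle := by
    rw [hFint]
    exact trap_integral_lower hδ ha hc hmid
  have havg := weyl_real hα F
  have hev : ∀ᶠ N : ℕ in atTop,
      c - a - ε < (N:ℝ)⁻¹ * ∑ n ∈ Finset.range N, F ((n * α : ℝ) : UnitAddCircle) := by
    apply havg.eventually (Ioi_mem_nhds _)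
    have h5 : ε = 5 * δ := by rw [hδdef]; ring
    linarith
  filter_upwards [hev, eventually_ge_atTop 1] with N hN hN1
  have hterm : ∀ n : ℕ, F ((n * α : ℝ) : UnitAddCircle)
      ≤ if Int.fract (n * α) ∈ Set.Ico a c then (1:ℝ) else 0 := by
    intro n
    have hfr : Int.fract ((n:ℝ) * α) ∈ Set.Ico (0:ℝ) 1 :=
      ⟨Int.fract_nonneg _, Int.fract_lt_one _⟩
    rw [← coe_fract_eq ((n:ℝ) * α), hFcoe _ hfr]
    by_cases hmem : Int.fract ((n:ℝ) * α) ∈ Set.Ico a c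
    · rw [if_pos hmem]; exact trap_le_one _ _ _ _
    · rw [if_neg hmem, trap_eq_zero_of_notmem hδ hmem]
  have hsum : ∑ n ∈ Finset.range N, F ((n * α : ℝ) : UnitAddCircle)
      ≤ (((Finset.range N).filter fun n : ℕ => Int.fract (n * α) ∈ Set.Ico a c).card : ℝ) := by
    calc ∑ n ∈ Finset.range N, F ((n * α : ℝ) : UnitAddCircle)
        ≤ ∑ n ∈ Finset.range N, (if Int.fract (n * α) ∈ Set.Ico a c then (1:ℝ) else 0) :=
          Finset.sum_le_sum (fun n _ => hterm n)
      _ = (((Finset.range N).filter fun n : ℕ => Int.fract (n * α) ∈ Set.Ico a c).card : ℝ) := by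
          rw [Finset.sum_boole]
  have hNpos : (0:ℝ) < N := by exact_mod_cast hN1
  have : (N:ℝ)⁻¹ * ∑ n ∈ Finset.range N, F ((n * α : ℝ) : UnitAddCircle)
      ≤ (((Finset.range N).filter fun n : ℕ => Int.fract (n * α) ∈ Set.Ico a c).card : ℝ) / N := by
    rw [div_eq_inv_mul]
    exact mul_le_mul_of_nonneg_left hsum (by positivity)
  linarith

lemma count_tendsto {α : ℝ} (hα : Irrational α) {a c : ℝ} (ha : 0 ≤ a) (hac : a ≤ c)
    (hc : c ≤ 1) :
    Tendsto (fun N : ℕ =>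
      ((((Finset.range N).filter fun n : ℕ => Int.fract (n * α) ∈ Set.Ico a c).card : ℝ) / N))
      atTop (nhds (c - a)) := by
  have hpart : ∀ N : ℕ,
      ((Finset.range N).filter fun n : ℕ => Int.fract (n * α) ∈ Set.Ico 0 a).card
      + ((Finset.range N).filter fun n : ℕ => Int.fract (n * α) ∈ Set.Ico a c).card
      + ((Finset.range N).filter fun n : ℕ => Int.fract (n * α) ∈ Set.Ico c 1).card = N := by
    intro N
    classical
    rw [Finset.card_filter, Finset.card_filter, Finset.card_filter,
      ← Finset.sum_add_distrib, ← Finset.sum_add_distrib]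
    conv_rhs => rw [← Finset.card_range N, Finset.card_eq_sum_ones]
    apply Finset.sum_congr rfl
    intro n _
    have h0 : 0 ≤ Int.fract ((n:ℝ) * α) := Int.fract_nonneg _
    have h1 : Int.fract ((n:ℝ) * α) < 1 := Int.fract_lt_one _
    by_cases hxa : Int.fract ((n:ℝ) * α) < a
    · simp [Set.mem_Ico, hxa, h0, h1, not_le.mpr hxa, not_le.mpr (hxa.trans_le hac)]
    · push_neg at hxa
      by_cases hxc : Int.fract ((n:ℝ) * α) < c
      · simp [Set.mem_Ico, hxa, hxc, not_lt.mpr hxa, not_le.mpr hxc]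
      · push_neg at hxc
        simp [Set.mem_Ico, hxc, h1, not_lt.mpr hxc, not_lt.mpr (hac.trans hxc), not_lt.mpr hxa]
  rw [Metric.tendsto_atTop]
  intro ε hε
  have ha1 : a ≤ 1 := hac.trans hc
  have hc0 : 0 ≤ c := ha.trans hac
  have h2 := count_lower hα ha hac hc (show (0:ℝ) < ε/2 by linarith)
  have h1 := count_lower hα (le_refl (0:ℝ)) ha ha1 (show (0:ℝ) < ε/8 by linarith)
  have h3 := count_lower hα hc0 hc (le_refl (1:ℝ)) (show (0:ℝ) < ε/8 by linarith)
  rw [Filter.eventually_atTop] at h1 h2 h3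
  obtain ⟨N₁, hN₁⟩ := h1
  obtain ⟨N₂, hN₂⟩ := h2
  obtain ⟨N₃, hN₃⟩ := h3
  refine ⟨max (max N₁ N₂) (max N₃ 1), fun N hN => ?_⟩
  have e1 := hN₁ N (le_trans (le_trans (le_max_left _ _) (le_max_left _ _)) hN)
  have e2 := hN₂ N (le_trans (le_trans (le_max_right _ _) (le_max_left _ _)) hN)
  have e3 := hN₃ N (le_trans (le_trans (le_max_left _ _) (le_max_right _ _)) hN)
  have hN1 : 1 ≤ N := le_trans (le_trans (le_max_right _ _) (le_max_right _ _)) hN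
  have hNpos : (0:ℝ) < N := by exact_mod_cast hN1
  have hsum : (((Finset.range N).filter fun n : ℕ => Int.fract (n * α) ∈ Set.Ico 0 a).card : ℝ)
      + (((Finset.range N).filter fun n : ℕ => Int.fract (n * α) ∈ Set.Ico a c).card : ℝ)
      + (((Finset.range N).filter fun n : ℕ => Int.fract (n * α) ∈ Set.Ico c 1).card : ℝ)
      = (N:ℝ) := by exact_mod_cast hpart N
  set C1 := (((Finset.range N).filter fun n : ℕ => Int.fract (n * α) ∈ Set.Ico 0 a).card : ℝ)
  set C2 := (((Finset.range N).filter fun n : ℕ => Int.fract (n * α) ∈ Set.Ico a c).card : ℝ)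
  set C3 := (((Finset.range N).filter fun n : ℕ => Int.fract (n * α) ∈ Set.Ico c 1).card : ℝ)
  have hdiv : C1/N + C2/N + C3/N = 1 := by
    field_simp
    linarith [hsum]
  rw [Real.dist_eq, abs_lt]
  constructor
  · linarith [e2]
  · -- upper bound
    have u1 : a - 0 - ε/8 ≤ C1/N := e1
    have u3 : 1 - c - ε/8 ≤ C3/N := e3
    linarith [u1, u3, hdiv]

lemma digit_iff (b d : ℕ) (hb : 2 ≤ b) (hd1 : 1 ≤ d) (n : ℕ) :
    (⌊(b : ℝ) ^ n / (10 : ℝ) ^ (⌊Real.logb 10 ((b : ℝ) ^ n)⌋ : ℤ)⌋ = (d : ℤ))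
    ↔ Int.fract ((n : ℝ) * Real.logb 10 b)
        ∈ Set.Ico (Real.logb 10 (d : ℝ)) (Real.logb 10 ((d : ℝ) + 1)) := by
  have hbpos : (0:ℝ) < (b:ℝ)^n := by positivity
  have hL : Real.logb 10 ((b:ℝ)^n) = (n:ℝ) * Real.logb 10 (b:ℝ) := Real.logb_pow 10 (b:ℝ) n
  set L := Real.logb 10 ((b:ℝ)^n) with hLdef
  have hquot : (b : ℝ) ^ n / (10 : ℝ) ^ (⌊L⌋ : ℤ) = (10:ℝ) ^ (Int.fract L) := by
    rw [show (b:ℝ)^n = (10:ℝ) ^ L from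
      (Real.rpow_logb (by norm_num) (by norm_num) hbpos).symm]
    rw [← Real.rpow_intCast (10:ℝ) ⌊L⌋, ← Real.rpow_sub (by norm_num)]
    congr 1
  have hdpos : (0:ℝ) < (d:ℝ) := by exact_mod_cast hd1
  have hd1pos : (0:ℝ) < (d:ℝ) + 1 := by linarith
  rw [hquot]
  rw [Int.floor_eq_iff]
  have hfr : Int.fract L = Int.fract ((n:ℝ) * Real.logb 10 (b:ℝ)) := by rw [hL]
  constructor
  · rintro ⟨hlo, hhi⟩
    constructor
    · rw [← hfr]
      have : (10:ℝ) ^ (Real.logb 10 (d:ℝ)) ≤ (10:ℝ) ^ (Int.fract L) := by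
        rw [Real.rpow_logb (by norm_num) (by norm_num) hdpos]
        exact_mod_cast hlo
      exact (Real.rpow_le_rpow_left_iff (by norm_num)).mp this
    · rw [← hfr]
      have : (10:ℝ) ^ (Int.fract L) < (10:ℝ) ^ (Real.logb 10 ((d:ℝ)+1)) := by
        rw [Real.rpow_logb (by norm_num) (by norm_num) hd1pos]
        push_cast
        exact_mod_cast hhi
      exact (Real.rpow_lt_rpow_left_iff (by norm_num)).mp this
  · rintro ⟨hlo, hhi⟩
    rw [← hfr] at hlo hhi
    constructor
    · have := (Real.rpow_le_rpow_left_iff (show (1:ℝ) < 10 by norm_num)).mpr hlo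
      rw [Real.rpow_logb (by norm_num) (by norm_num) hdpos] at this
      exact_mod_cast this
    · have := (Real.rpow_lt_rpow_left_iff (show (1:ℝ) < 10 by norm_num)).mpr hhi
      rw [Real.rpow_logb (by norm_num) (by norm_num) hd1pos] at this
      push_cast
      exact_mod_cast this

/-- If `b > 1` is an integer not a power of 10, then `(b^n)` satisfies
Benford's law: the natural density of `{n : first significant digit of b^n = d}` is
`log₁₀(1 + 1/d)` for each `d ∈ {1, …, 9}`. -/
theorem benford_law_for_powers (b : ℕ) (hb : 2 ≤ b) (h : ∀ k : ℕ, 1 ≤ k → b ≠ 10 ^ k)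
    (d : ℕ) (hd : d ∈ Finset.Icc 1 9) :
    Filter.Tendsto (fun N : ℕ =>
      (((Finset.Icc 1 N).filter fun n : ℕ =>
        ⌊(b : ℝ) ^ n / (10 : ℝ) ^ (⌊Real.logb 10 ((b : ℝ) ^ n)⌋ : ℤ)⌋ = (d : ℤ)).card : ℝ) / N)
      Filter.atTop (nhds (Real.logb 10 (1 + 1 / d))) := by
  classical
  rw [Finset.mem_Icc] at hd
  obtain ⟨hd1, hd9⟩ := hd
  set α := Real.logb 10 (b:ℝ) with hαdef
  have hα : Irrational α := logb_irrational b hb h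
  set a := Real.logb 10 (d:ℝ) with hadef
  set c := Real.logb 10 ((d:ℝ)+1) with hcdef
  have hdpos : (1:ℝ) ≤ (d:ℝ) := by exact_mod_cast hd1
  have ha : 0 ≤ a := Real.logb_nonneg (by norm_num) hdpos
  have hac : a ≤ c := by
    apply Real.logb_le_logb_of_le (by norm_num) (by linarith)
    linarith
  have hc : c ≤ 1 := by
    have h10 : (d:ℝ) + 1 ≤ 10 := by
      have : (d:ℕ) + 1 ≤ 10 := by omega
      exact_mod_cast this
    calc c ≤ Real.logb 10 10 := Real.logb_le_logb_of_le (by norm_num) (by linarith) h10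
      _ = 1 := Real.logb_self_eq_one (by norm_num)
  have hval : Real.logb 10 (1 + 1/(d:ℝ)) = c - a := by
    rw [hadef, hcdef, ← Real.logb_div (by linarith) (by linarith)]
    congr 1
    field_simp
  rw [hval]
  -- replace the filter predicate
  have hfilter : ∀ N : ℕ, ((Finset.Icc 1 N).filter fun n : ℕ =>
        ⌊(b : ℝ) ^ n / (10 : ℝ) ^ (⌊Real.logb 10 ((b : ℝ) ^ n)⌋ : ℤ)⌋ = (d : ℤ))
      = ((Finset.Icc 1 N).filter fun n : ℕ => Int.fract ((n:ℝ) * α) ∈ Set.Ico a c) := by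
    intro N
    apply Finset.filter_congr
    intro n _
    rw [digit_iff b d hb hd1 n]
  have hcount := count_tendsto hα ha hac hc
  -- notation
  set Q : ℕ → Prop := fun n : ℕ => Int.fract ((n:ℝ) * α) ∈ Set.Ico a c with hQ
  have hrangeIcc : ∀ N : ℕ, ((Finset.range (N+1)).filter Q).card
      = ((Finset.Icc 1 N).filter Q).card + (if Q 0 then 1 else 0) := by
    intro N
    have hins : Finset.range (N+1) = insert 0 (Finset.Icc 1 N) := by
      ext x
      simp only [Finset.mem_range, Finset.mem_insert, Finset.mem_Icc]
      omega
    rw [hins, Finset.filter_insert]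
    by_cases hQ0 : Q 0
    · rw [if_pos hQ0, if_pos hQ0, Finset.card_insert_of_notMem, add_comm]
      intro hmem
      have := Finset.mem_of_mem_filter 0 hmem
      simp at this
    · rw [if_neg hQ0, if_neg hQ0, add_zero]
  -- limits
  have hshift : Tendsto (fun N : ℕ =>
      (((Finset.range (N+1)).filter Q).card : ℝ) / ((N:ℝ)+1)) atTop (nhds (c - a)) := by
    apply Filter.Tendsto.congr _ (hcount.comp (tendsto_add_atTop_nat 1))
    intro N
    show ((((Finset.range (N+1)).filter Q).card : ℝ)) / ((N+1 : ℕ) : ℝ) = _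
    norm_cast
  have hratio : Tendsto (fun N : ℕ => ((N:ℝ)+1) / N) atTop (nhds 1) := by
    apply Tendsto.congr' (f₁ := fun N : ℕ => 1 + 1/(N:ℝ))
    · filter_upwards [eventually_ge_atTop 1] with N hN
      have hNpos : (0:ℝ) < N := by exact_mod_cast hN
      field_simp
    · have := tendsto_one_div_atTop_nhds_zero_nat (𝕜 := ℝ)
      have h2 := (tendsto_const_nhds (x := (1:ℝ)) (f := atTop (α := ℕ))).add this
      simpa using h2
  have hupper : Tendsto (fun N : ℕ =>
      (((Finset.range (N+1)).filter Q).card : ℝ) / N) atTop (nhds (c - a)) := by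
    have := hshift.mul hratio
    rw [mul_one] at this
    apply Tendsto.congr' _ this
    filter_upwards [eventually_ge_atTop 1] with N hN
    have hNpos : (0:ℝ) < N := by exact_mod_cast hN
    field_simp
  have hlower : Tendsto (fun N : ℕ =>
      ((((Finset.range (N+1)).filter Q).card : ℝ) - 1) / N) atTop (nhds (c - a)) := by
    have hinv := tendsto_one_div_atTop_nhds_zero_nat (𝕜 := ℝ)
    have := hupper.sub hinv
    rw [sub_zero] at this
    apply Tendsto.congr' _ this
    filter_upwards with N
    rw [sub_div]
  -- sandwich
  apply tendsto_of_tendsto_of_tendsto_of_le_of_le' hlower hupper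
  · filter_upwards [eventually_ge_atTop 1] with N hN
    have hNpos : (0:ℝ) < (N:ℝ) := by exact_mod_cast hN
    rw [hfilter N]
    apply (div_le_div_iff_of_pos_right hNpos).mpr
    have hr := hrangeIcc N
    have hle : (((Finset.range (N+1)).filter Q).card : ℝ)
        ≤ (((Finset.Icc 1 N).filter Q).card : ℝ) + 1 := by
      rw [hr]
      push_cast
      split_ifs <;> simp
    linarith
  · filter_upwards with N
    rw [hfilter N]
    rcases Nat.eq_zero_or_pos N with rfl | hNp
    · simp
    have hNpos : (0:ℝ) < (N:ℝ) := by exact_mod_cast hNp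
    apply (div_le_div_iff_of_pos_right hNpos).mpr
    have hr := hrangeIcc N
    have hle : (((Finset.Icc 1 N).filter Q).card : ℝ)
        ≤ (((Finset.range (N+1)).filter Q).card : ℝ) := by
      rw [hr]
      push_cast
      split_ifs <;> simp
    exact hle
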